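/- Let f : ℝ → ℝ be continuous on [0,2], nonincreasing on [0,2], convex on [0,2], continuously differentiable on (0,2), and twice differentiable on (0,1) and on (1,2). Define F : (0,2) → ℝ by F(x) = (1/(x+1))·f(0) + (x/(x+1))·f(x+1) for x ∈ (0,1], and F(x) = ((2−x)/(3−x))·f(x−1) + (1/(3−x))·f(2) for x ∈ (1,2). Then F is convex on the interval (0,1) and convex on the interval (1,2). -/

import Mathlib

open Set

/-- Convexity transfers along equality on the set. -/
lemma convexOn_congr_aux {s : Set ℝ} {g h : ℝ → ℝ} (hs : ConvexOn ℝ s g)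
    (he : ∀ x ∈ s, g x = h x) : ConvexOn ℝ s h := by
  refine ⟨hs.1, fun x hx y hy a b ha hb hab => ?_⟩
  rw [← he x hx, ← he y hy, ← he _ (hs.1 hx hy ha hb hab)]
  exact hs.2 hx hy ha hb hab

/-- If `g` is monotone on a neighborhood of `a` and differentiable at `a`,
then `deriv g a ≥ 0`. -/
lemma deriv_nonneg_of_monotoneOn_nhds {g : ℝ → ℝ} {s : Set ℝ} {a g' : ℝ}
    (hs : s ∈ nhds a) (hm : MonotoneOn g s) (hd : HasDerivAt g g' a) : 0 ≤ g' := by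
  have ha : a ∈ s := mem_of_mem_nhds hs
  have ht : Filter.Tendsto (slope g a) (nhdsWithin a (Ioi a)) (nhds g') :=
    (hasDerivAt_iff_tendsto_slope.mp hd).mono_left
      (nhdsWithin_mono a fun y hy => ne_of_gt hy)
  refine ge_of_tendsto ht ?_
  filter_upwards [eventually_nhdsWithin_of_eventually_nhds
      (Filter.eventually_of_mem hs fun y hy => hy), self_mem_nhdsWithin] with y hy hy'
  have h1 : g a ≤ g y := hm ha hy (le_of_lt hy')
  rw [slope_def_field]
  have hya : a < y := hy'
  exact div_nonneg (by linarith) (by linarith)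

/-- Convexity of the first branch. -/
lemma branch1_convex (f : ℝ → ℝ)
    (hconv : ConvexOn ℝ (Set.Icc 0 2) f)
    (hC1 : ContDiffOn ℝ 1 f (Set.Ioo 0 2))
    (h2b : ∀ x ∈ Set.Ioo (1 : ℝ) 2, DifferentiableAt ℝ (deriv f) x) :
    ConvexOn ℝ (Set.Ioo (0:ℝ) 1)
      (fun x => (1 / (x + 1)) * f 0 + (x / (x + 1)) * f (x + 1)) := by
  have hfdiff : ∀ y ∈ Set.Ioo (0:ℝ) 2, DifferentiableAt ℝ f y := fun y hy =>
    (hC1.differentiableOn one_ne_zero).differentiableAt (isOpen_Ioo.mem_nhds hy)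
  have hmonoderiv : MonotoneOn (deriv f) (Set.Ioo (0:ℝ) 2) :=
    (hconv.subset Set.Ioo_subset_Icc_self (convex_Ioo 0 2)).monotoneOn_deriv hfdiff
  have hd1 : ∀ x ∈ Set.Ioo (0:ℝ) 1, HasDerivAt
      (fun x => (1 / (x + 1)) * f 0 + (x / (x + 1)) * f (x + 1))
      ((f (x+1) - f 0)/(x+1)^2 + (x/(x+1)) * deriv f (x+1)) x := by
    intro x hx
    obtain ⟨hx0, hx1⟩ := hx
    have hu : x + 1 ≠ 0 := by linarith
    have hx12 : x + 1 ∈ Set.Ioo (0:ℝ) 2 := ⟨by linarith, by linarith⟩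
    have h_id1 : HasDerivAt (fun y : ℝ => y + 1) 1 x := (hasDerivAt_id x).add_const 1
    have hf1 : HasDerivAt f (deriv f (x+1)) (x+1) := (hfdiff _ hx12).hasDerivAt
    have hfc : HasDerivAt (fun y : ℝ => f (y+1)) (deriv f (x+1) * 1) x := hf1.comp x h_id1
    have hA : HasDerivAt (fun y : ℝ => 1/(y+1)) ((0*(x+1) - 1*1)/(x+1)^2) x :=
      (hasDerivAt_const x (1:ℝ)).div h_id1 hu
    have hB : HasDerivAt (fun y : ℝ => y/(y+1)) ((1*(x+1) - x*1)/(x+1)^2) x :=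
      (hasDerivAt_id x).div h_id1 hu
    have := (hA.mul_const (f 0)).add (hB.mul hfc)
    refine this.congr_deriv ?_
    field_simp
    ring
  have hd2 : ∀ x ∈ Set.Ioo (0:ℝ) 1, HasDerivAt
      (fun x => (f (x+1) - f 0)/(x+1)^2 + (x/(x+1)) * deriv f (x+1))
      (2/(x+1)^3 * ((x+1) * deriv f (x+1) - (f (x+1) - f 0))
        + (x/(x+1)) * deriv (deriv f) (x+1)) x := by
    intro x hx
    obtain ⟨hx0, hx1⟩ := hx
    have hu : x + 1 ≠ 0 := by linarith
    have hu2 : (x + 1)^2 ≠ 0 := pow_ne_zero 2 hu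
    have hx12 : x + 1 ∈ Set.Ioo (0:ℝ) 2 := ⟨by linarith, by linarith⟩
    have hx12' : x + 1 ∈ Set.Ioo (1:ℝ) 2 := ⟨by linarith, by linarith⟩
    have h_id1 : HasDerivAt (fun y : ℝ => y + 1) 1 x := (hasDerivAt_id x).add_const 1
    have hf1 : HasDerivAt f (deriv f (x+1)) (x+1) := (hfdiff _ hx12).hasDerivAt
    have hfc : HasDerivAt (fun y : ℝ => f (y+1)) (deriv f (x+1) * 1) x := hf1.comp x h_id1
    have hdf : HasDerivAt (deriv f) (deriv (deriv f) (x+1)) (x+1) := (h2b _ hx12').hasDerivAt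
    have hdfc : HasDerivAt (fun y : ℝ => deriv f (y+1)) (deriv (deriv f) (x+1) * 1) x :=
      (hdf.comp x h_id1 :)
    have hsq : HasDerivAt (fun y : ℝ => (y+1)^2) ((2:ℕ) * (x+1)^(2-1) * 1) x := h_id1.pow 2
    have hB : HasDerivAt (fun y : ℝ => y/(y+1)) ((1*(x+1) - x*1)/(x+1)^2) x :=
      (hasDerivAt_id x).div h_id1 hu
    have hC : HasDerivAt (fun y : ℝ => (f (y+1) - f 0)/(y+1)^2)
        (((deriv f (x+1) * 1) * (x+1)^2 - (f (x+1) - f 0) * ((2:ℕ) * (x+1)^(2-1) * 1))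
          / ((x+1)^2)^2) x := (hfc.sub_const (f 0)).div hsq hu2
    have := hC.add (hB.mul hdfc)
    refine this.congr_deriv ?_
    field_simp
    ring
  refine (convexOn_of_hasDerivWithinAt2_nonneg (convex_Ioo 0 1)
    (f' := fun x => (f (x+1) - f 0)/(x+1)^2 + (x/(x+1)) * deriv f (x+1))
    (f'' := fun x => 2/(x+1)^3 * ((x+1) * deriv f (x+1) - (f (x+1) - f 0))
      + (x/(x+1)) * deriv (deriv f) (x+1))
    ?_ ?_ ?_ ?_)
  · exact fun x hx => ((hd1 x hx).continuousAt).continuousWithinAt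
  · rw [interior_Ioo]; exact fun x hx => (hd1 x hx).hasDerivWithinAt
  · rw [interior_Ioo]; exact fun x hx => (hd2 x hx).hasDerivWithinAt
  · rw [interior_Ioo]
    intro x hx
    obtain ⟨hx0, hx1⟩ := hx
    have hu : (0:ℝ) < x + 1 := by linarith
    have hx12 : x + 1 ∈ Set.Ioo (0:ℝ) 2 := ⟨by linarith, by linarith⟩
    have hslope : slope f 0 (x+1) ≤ deriv f (x+1) :=
      hconv.slope_le_deriv (by simp)
        (by constructor <;> [linarith; linarith] : x+1 ∈ Set.Icc (0:ℝ) 2)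
        hu (hfdiff _ hx12)
    rw [slope_def_field] at hslope
    have h1 : f (x+1) - f 0 ≤ (x+1) * deriv f (x+1) := by
      rw [sub_zero] at hslope
      calc f (x+1) - f 0 = ((f (x+1) - f 0)/(x+1)) * (x+1) := by field_simp
        _ ≤ deriv f (x+1) * (x+1) := mul_le_mul_of_nonneg_right hslope (le_of_lt hu)
        _ = (x+1) * deriv f (x+1) := mul_comm _ _
    have h2 : 0 ≤ deriv (deriv f) (x+1) :=
      deriv_nonneg_of_monotoneOn_nhds (isOpen_Ioo.mem_nhds hx12) hmonoderiv
        ((h2b _ ⟨by linarith, by linarith⟩).hasDerivAt)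
    have hp : (0:ℝ) < 2/(x+1)^3 := by positivity
    have hq : (0:ℝ) ≤ x/(x+1) := by positivity
    nlinarith

/-- Convexity of the second branch. -/
lemma branch2_convex (f : ℝ → ℝ)
    (hconv : ConvexOn ℝ (Set.Icc 0 2) f)
    (hC1 : ContDiffOn ℝ 1 f (Set.Ioo 0 2))
    (h2a : ∀ x ∈ Set.Ioo (0 : ℝ) 1, DifferentiableAt ℝ (deriv f) x) :
    ConvexOn ℝ (Set.Ioo (1:ℝ) 2)
      (fun x => ((2 - x) / (3 - x)) * f (x - 1) + (1 / (3 - x)) * f 2) := by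
  have hfdiff : ∀ y ∈ Set.Ioo (0:ℝ) 2, DifferentiableAt ℝ f y := fun y hy =>
    (hC1.differentiableOn one_ne_zero).differentiableAt (isOpen_Ioo.mem_nhds hy)
  have hmonoderiv : MonotoneOn (deriv f) (Set.Ioo (0:ℝ) 2) :=
    (hconv.subset Set.Ioo_subset_Icc_self (convex_Ioo 0 2)).monotoneOn_deriv hfdiff
  have hd1 : ∀ x ∈ Set.Ioo (1:ℝ) 2, HasDerivAt
      (fun x => ((2 - x) / (3 - x)) * f (x - 1) + (1 / (3 - x)) * f 2)
      ((f 2 - f (x-1))/(3-x)^2 + ((2-x)/(3-x)) * deriv f (x-1)) x := by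
    intro x hx
    obtain ⟨hx1, hx2⟩ := hx
    have hu : (3:ℝ) - x ≠ 0 := by linarith
    have hxm : x - 1 ∈ Set.Ioo (0:ℝ) 2 := ⟨by linarith, by linarith⟩
    have h3 : HasDerivAt (fun y : ℝ => 3 - y) (-1) x := by
      simpa using (hasDerivAt_id x).const_sub 3
    have h2m : HasDerivAt (fun y : ℝ => 2 - y) (-1) x := by
      simpa using (hasDerivAt_id x).const_sub 2
    have hm1 : HasDerivAt (fun y : ℝ => y - 1) 1 x := (hasDerivAt_id x).sub_const 1
    have hf1 : HasDerivAt f (deriv f (x-1)) (x-1) := (hfdiff _ hxm).hasDerivAt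
    have hfc : HasDerivAt (fun y : ℝ => f (y-1)) (deriv f (x-1) * 1) x := hf1.comp x hm1
    have hA : HasDerivAt (fun y : ℝ => (2-y)/(3-y))
        (((-1)*(3-x) - (2-x)*(-1))/(3-x)^2) x := h2m.div h3 hu
    have hB : HasDerivAt (fun y : ℝ => 1/(3-y)) ((0*(3-x) - 1*(-1))/(3-x)^2) x :=
      (hasDerivAt_const x (1:ℝ)).div h3 hu
    have := (hA.mul hfc).add (hB.mul_const (f 2))
    refine this.congr_deriv ?_
    field_simp
    ring
  have hd2 : ∀ x ∈ Set.Ioo (1:ℝ) 2, HasDerivAt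
      (fun x => (f 2 - f (x-1))/(3-x)^2 + ((2-x)/(3-x)) * deriv f (x-1))
      (2/(3-x)^3 * ((f 2 - f (x-1)) - (3-x) * deriv f (x-1))
        + ((2-x)/(3-x)) * deriv (deriv f) (x-1)) x := by
    intro x hx
    obtain ⟨hx1, hx2⟩ := hx
    have hu : (3:ℝ) - x ≠ 0 := by linarith
    have hu2 : ((3:ℝ)-x)^2 ≠ 0 := pow_ne_zero 2 hu
    have hxm : x - 1 ∈ Set.Ioo (0:ℝ) 2 := ⟨by linarith, by linarith⟩
    have hxm' : x - 1 ∈ Set.Ioo (0:ℝ) 1 := ⟨by linarith, by linarith⟩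
    have h3 : HasDerivAt (fun y : ℝ => 3 - y) (-1) x := by
      simpa using (hasDerivAt_id x).const_sub 3
    have h2m : HasDerivAt (fun y : ℝ => 2 - y) (-1) x := by
      simpa using (hasDerivAt_id x).const_sub 2
    have hm1 : HasDerivAt (fun y : ℝ => y - 1) 1 x := (hasDerivAt_id x).sub_const 1
    have hf1 : HasDerivAt f (deriv f (x-1)) (x-1) := (hfdiff _ hxm).hasDerivAt
    have hfc : HasDerivAt (fun y : ℝ => f (y-1)) (deriv f (x-1) * 1) x := hf1.comp x hm1
    have hdf : HasDerivAt (deriv f) (deriv (deriv f) (x-1)) (x-1) := (h2a _ hxm').hasDerivAt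
    have hdfc : HasDerivAt (fun y : ℝ => deriv f (y-1)) (deriv (deriv f) (x-1) * 1) x :=
      (hdf.comp x hm1 :)
    have hsq : HasDerivAt (fun y : ℝ => (3-y)^2) ((2:ℕ) * (3-x)^(2-1) * (-1)) x := h3.pow 2
    have hA : HasDerivAt (fun y : ℝ => (2-y)/(3-y))
        (((-1)*(3-x) - (2-x)*(-1))/(3-x)^2) x := h2m.div h3 hu
    have hC : HasDerivAt (fun y : ℝ => (f 2 - f (y-1))/(3-y)^2)
        (((-(deriv f (x-1) * 1)) * (3-x)^2 - (f 2 - f (x-1)) * ((2:ℕ) * (3-x)^(2-1) * (-1)))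
          / ((3-x)^2)^2) x := (hfc.const_sub (f 2)).div hsq hu2
    have h' := hC.add (hA.mul hdfc)
    refine h'.congr_deriv ?_
    field_simp
    ring
  refine (convexOn_of_hasDerivWithinAt2_nonneg (convex_Ioo 1 2)
    (f' := fun x => (f 2 - f (x-1))/(3-x)^2 + ((2-x)/(3-x)) * deriv f (x-1))
    (f'' := fun x => 2/(3-x)^3 * ((f 2 - f (x-1)) - (3-x) * deriv f (x-1))
      + ((2-x)/(3-x)) * deriv (deriv f) (x-1))
    ?_ ?_ ?_ ?_)
  · exact fun x hx => ((hd1 x hx).continuousAt).continuousWithinAt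
  · rw [interior_Ioo]; exact fun x hx => (hd1 x hx).hasDerivWithinAt
  · rw [interior_Ioo]; exact fun x hx => (hd2 x hx).hasDerivWithinAt
  · rw [interior_Ioo]
    intro x hx
    obtain ⟨hx1, hx2⟩ := hx
    have hu : (0:ℝ) < 3 - x := by linarith
    have hxm : x - 1 ∈ Set.Ioo (0:ℝ) 2 := ⟨by linarith, by linarith⟩
    have hslope : deriv f (x-1) ≤ slope f (x-1) 2 :=
      hconv.deriv_le_slope ⟨by linarith, by linarith⟩ (by constructor <;> norm_num)
        (by linarith) (hfdiff _ hxm)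
    rw [slope_def_field] at hslope
    have h1 : (3-x) * deriv f (x-1) ≤ f 2 - f (x-1) := by
      have h32 : (2:ℝ) - (x-1) = 3 - x := by ring
      rw [h32] at hslope
      calc (3-x) * deriv f (x-1) ≤ (3-x) * ((f 2 - f (x-1))/(3-x)) :=
            mul_le_mul_of_nonneg_left hslope (le_of_lt hu)
        _ = f 2 - f (x-1) := by field_simp
    have h2 : 0 ≤ deriv (deriv f) (x-1) :=
      deriv_nonneg_of_monotoneOn_nhds (isOpen_Ioo.mem_nhds hxm) hmonoderiv
        ((h2a _ ⟨by linarith, by linarith⟩).hasDerivAt)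
    have hp : (0:ℝ) < 2/(3-x)^3 := by positivity
    have hq : (0:ℝ) ≤ (2-x)/(3-x) := by
      apply div_nonneg <;> linarith
    nlinarith

/-- Lemma on convexity: if `f` is continuous, nonincreasing and convex on
`[0,2]`, continuously differentiable on `(0,2)`, and twice differentiable on `(0,1)` and
on `(1,2)`, then the function
`F(x) = (1/(x+1))·f(0) + (x/(x+1))·f(x+1)` for `x ∈ (0,1]` and
`F(x) = ((2−x)/(3−x))·f(x−1) + (1/(3−x))·f(2)` for `x ∈ (1,2)`
is convex on `(0,1)` and on `(1,2)`. -/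
theorem convexOn_of_convex_interpolation (f : ℝ → ℝ)
    (hcont : ContinuousOn f (Set.Icc 0 2))
    (hmono : AntitoneOn f (Set.Icc 0 2))
    (hconv : ConvexOn ℝ (Set.Icc 0 2) f)
    (hC1 : ContDiffOn ℝ 1 f (Set.Ioo 0 2))
    (h2a : ∀ x ∈ Set.Ioo (0 : ℝ) 1, DifferentiableAt ℝ (deriv f) x)
    (h2b : ∀ x ∈ Set.Ioo (1 : ℝ) 2, DifferentiableAt ℝ (deriv f) x) :
    ConvexOn ℝ (Set.Ioo (0 : ℝ) 1)
      (fun x =>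
        if x ≤ 1 then (1 / (x + 1)) * f 0 + (x / (x + 1)) * f (x + 1)
        else ((2 - x) / (3 - x)) * f (x - 1) + (1 / (3 - x)) * f 2) ∧
    ConvexOn ℝ (Set.Ioo (1 : ℝ) 2)
      (fun x =>
        if x ≤ 1 then (1 / (x + 1)) * f 0 + (x / (x + 1)) * f (x + 1)
        else ((2 - x) / (3 - x)) * f (x - 1) + (1 / (3 - x)) * f 2) := by
  constructor
  · refine convexOn_congr_aux (branch1_convex f hconv hC1 h2b) fun x hx => ?_
    rw [if_pos (le_of_lt hx.2)]
  · refine convexOn_congr_aux (branch2_convex f hconv hC1 h2a) fun x hx => ?_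
    rw [if_neg (not_le.mpr hx.1)]
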